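/- arXiv:2303.04860 — 2 statements merged into one kernel-verified Lean document; each statement's English description precedes it below -/
import Mathlib

section
/- Let Z be a compact metrizable abelian topological group whose Pontryagin dual is divisible, let A be a countable discrete divisible abelian group, and let k ≥ 1. Then the abelian group ML_k(Z,A) of continuous multilinear maps from Z^k to A is countable and divisible. -/
set_option maxHeartbeats 1000000
set_option linter.unusedSectionVars false
set_option linter.unusedTactic false
set_option linter.unreachableTactic false
set_option linter.unnecessarySimpa false

open TopologicalSpace Set Function

/-- `b : Z^k → A` is multilinear if it is a group homomorphism in each coordinate. -/
def IsMultilinear {Z A : Type*} [AddCommGroup Z] [AddCommGroup A] {k : ℕ}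
    (b : (Fin k → Z) → A) : Prop :=
  ∀ (i : Fin k) (g : Fin k → Z) (x y : Z),
    b (Function.update g i (x + y)) = b (Function.update g i x) + b (Function.update g i y)

open TopologicalSpace Set

lemma countable_clopens (X : Type*) [TopologicalSpace X] [CompactSpace X]
    [SecondCountableTopology X] : {s : Set X | IsClopen s}.Countable := by
  have hB : (countableBasis X).Countable := countable_countableBasis X
  have : {s : Set X | IsClopen s} ⊆ sUnion '' {t | t.Finite ∧ t ⊆ countableBasis X} := by
    intro s hs
    obtain ⟨S, hSB, rfl⟩ := (isBasis_countableBasis X).open_eq_sUnion hs.isOpen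
    have hcomp : IsCompact (⋃₀ S) := hs.isClosed.isCompact
    obtain ⟨T, hTS, hTfin, hcov⟩ := hcomp.elim_finite_subcover_image
      (fun u hu => (isBasis_countableBasis X).isOpen (hSB hu))
      (by rw [sUnion_eq_biUnion])
    refine ⟨T, ⟨hTfin, hTS.trans hSB⟩, ?_⟩
    apply subset_antisymm
    · exact sUnion_subset fun u hu => subset_sUnion_of_mem (hTS hu)
    · intro x hx
      obtain ⟨u, hu, hxu⟩ := mem_iUnion₂.1 (hcov hx)
      exact ⟨u, hu, hxu⟩
  exact ((countable_setOf_finite_subset hB).image _).mono this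

lemma countable_continuous_to_discrete (X A : Type*) [TopologicalSpace X] [CompactSpace X]
    [SecondCountableTopology X] [TopologicalSpace A] [DiscreteTopology A] [Countable A] :
    Countable {f : X → A // Continuous f} := by
  classical
  set C : Set (Set (A × Set X)) := {t | t.Finite ∧ t ⊆ univ ×ˢ {s | IsClopen s}}
  have hC : C.Countable :=
    countable_setOf_finite_subset (countable_univ.prod (countable_clopens X))
  haveI := hC.to_subtype
  set F : {f : X → A // Continuous f} → C := fun f =>
    ⟨(fun a => (a, f.1 ⁻¹' {a})) '' range f.1, by
      constructor
      · have : (range f.1).Finite := by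
          have := isCompact_univ.image f.2
          simpa [Set.image_univ] using this.finite_of_discrete
        exact this.image _
      · rintro p ⟨a, _, rfl⟩
        exact ⟨trivial, (isClopen_discrete {a}).preimage f.2⟩⟩
  have hF : Function.Injective F := by
    intro f g hfg
    have h : (fun a => (a, f.1 ⁻¹' {a})) '' range f.1
        = (fun a => (a, g.1 ⁻¹' {a})) '' range g.1 := congrArg Subtype.val hfg
    apply Subtype.ext; funext x
    have hx : (f.1 x, f.1 ⁻¹' {f.1 x}) ∈ (fun a => (a, g.1 ⁻¹' {a})) '' range g.1 := by
      rw [← h]; exact ⟨f.1 x, mem_range_self x, rfl⟩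
    obtain ⟨a, _, ha⟩ := hx
    have ha1 : a = f.1 x := congrArg Prod.fst ha
    have ha2 : g.1 ⁻¹' {a} = f.1 ⁻¹' {f.1 x} := congrArg Prod.snd ha
    have : x ∈ g.1 ⁻¹' {a} := by rw [ha2]; exact rfl
    rw [ha1] at this; exact this.symm
  exact hF.countable


section L1
variable {Z A : Type*} [AddCommGroup Z] [TopologicalSpace Z] [IsTopologicalAddGroup Z]
  [CompactSpace Z] [AddCommGroup A] [TopologicalSpace A] [DiscreteTopology A]

variable {Z A : Type*} [AddCommGroup Z] [TopologicalSpace Z] [IsTopologicalAddGroup Z]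
  [CompactSpace Z] [AddCommGroup A] [TopologicalSpace A] [DiscreteTopology A]

lemma ML.update_zero_eq {k : ℕ} {b : (Fin k → Z) → A} (hb : IsMultilinear b)
    (i : Fin k) (g : Fin k → Z) : b (update g i 0) = 0 := by
  have := hb i g 0 0
  rw [add_zero] at this
  exact add_eq_right.1 this.symm

/-- L1: invariance under an open subgroup -/
lemma ML.exists_open_subgroup {k : ℕ} {b : (Fin k → Z) → A} (hbc : Continuous b)
    (hb : IsMultilinear b) :
    ∃ U : AddSubgroup Z, IsOpen (U : Set Z) ∧
      ∀ g g' : Fin k → Z, (∀ i, g i - g' i ∈ U) → b g = b g' := by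
  classical
  -- Step A: a box neighborhood of 0 on which translation doesn't change b
  have hD : IsOpen {p : (Fin k → Z) × (Fin k → Z) | b (p.1 + p.2) = b p.1} := by
    have : Continuous (fun p : (Fin k → Z) × (Fin k → Z) =>
        (b (p.1 + p.2), b p.1) : _ → A × A) := by
      exact ((hbc.comp (continuous_fst.add continuous_snd)).prodMk (hbc.comp continuous_fst))
    exact (isOpen_discrete {q : A × A | q.1 = q.2}).preimage this
  obtain ⟨u, v, hu, hv, huu, hvv, huv⟩ := generalized_tube_lemma isCompact_univ
    (isCompact_singleton (x := (0 : Fin k → Z))) hD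
    (by rintro ⟨g, h⟩ ⟨-, rfl⟩; simp)
  have h0v : (0 : Fin k → Z) ∈ v := hvv rfl
  obtain ⟨I, w, hw, hwv⟩ := isOpen_pi_iff.1 hv 0 h0v
  set V : Set Z := ⋂ i ∈ I, w i with hV
  have hVo : IsOpen V := isOpen_biInter_finset fun i hi => (hw i hi).1
  have h0V : (0 : Z) ∈ V := mem_iInter₂.2 fun i hi => (hw i hi).2
  have hVstable : ∀ (g h : Fin k → Z), (∀ i, h i ∈ V) → b (g + h) = b g := by
    intro g h hh
    refine huv (Set.mk_mem_prod (huu trivial) (hwv ?_))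
    intro i hi
    exact mem_iInter₂.1 (hh i) i hi
  -- Step B/C: the subgroup generated by V kills each coordinate
  refine ⟨AddSubgroup.closure V, ?_, ?_⟩
  · exact AddSubgroup.isOpen_of_mem_nhds _ (Filter.mem_of_superset (hVo.mem_nhds h0V)
      AddSubgroup.subset_closure)
  · have hkill : ∀ (g : Fin k → Z) (i : Fin k) (z : Z),
        z ∈ AddSubgroup.closure V → b (update g i z) = 0 := by
      intro g i z hz
      set φ : Z →+ A := AddMonoidHom.mk' (fun x => b (update g i x)) (hb i g) with hφ
      have hker : AddSubgroup.closure V ≤ φ.ker := by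
        rw [AddSubgroup.closure_le]
        intro x hx
        have : update g i x = update g i 0 + Pi.single i x := by
          funext j
          by_cases hj : j = i
          · subst hj; simp
          · simp [hj, update_of_ne hj]
        have h2 : b (update g i x) = b (update g i 0) := by
          rw [this]
          exact hVstable _ _ (fun j => by
            by_cases hj : j = i
            · subst hj; simpa using hx
            · simpa [Pi.single_apply, hj] using h0V)
        show φ x = 0
        simpa [hφ, h2] using ML.update_zero_eq hb i g
      exact hker hz
    -- Step D: telescoping
    intro g g' hgg
    have main : ∀ j : ℕ, ∀ g g' : Fin k → Z, (∀ i, g i - g' i ∈ AddSubgroup.closure V) →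
        (∀ i : Fin k, (j : ℕ) ≤ (i : ℕ) → g i = g' i) → b g = b g' := by
      intro j
      induction j with
      | zero =>
        intro g g' _ h
        have : g = g' := funext fun i => h i (Nat.zero_le _)
        rw [this]
      | succ j ih =>
        intro g g' hU h
        by_cases hj : j < k
        · set i : Fin k := ⟨j, hj⟩
          have step : b g = b (update g i (g' i)) := by
            have h1 := hb i g (g' i) (g i - g' i)
            rw [add_sub_cancel, update_eq_self] at h1
            rw [h1, hkill g i _ (hU i), add_zero]
          rw [step]
          refine ih (update g i (g' i)) g' (fun i' => ?_) (fun i' hi' => ?_)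
          · by_cases hii : i' = i
            · subst hii; simpa using AddSubgroup.zero_mem _
            · rw [update_of_ne hii]; exact hU i'
          · by_cases hii : i' = i
            · subst hii; simp
            · rw [update_of_ne hii]
              refine h i' ?_
              rcases Nat.lt_or_ge (i' : ℕ) (j+1) with h' | h'
              · exfalso
                apply hii
                have : (i' : ℕ) = j := Nat.le_antisymm (Nat.lt_succ_iff.1 h') hi'
                exact Fin.ext this
              · exact h'
        · -- j ≥ k: condition vacuous already at level j
          refine ih g g' hU (fun i hi => absurd (lt_of_lt_of_le i.isLt (le_of_not_gt hj))
            (not_lt.2 hi))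
    exact main k g g' hgg (fun i hi => absurd hi (not_le.2 i.isLt))


end L1


section L3


lemma nz_smul_comm {A : Type*} [AddCommGroup A] (n : ℕ) (k : ℤ) (a : A) :
    n • (k • a) = k • (n • a) := by
  rw [← natCast_zsmul (k • a), ← mul_smul, ← natCast_zsmul a, ← mul_smul, mul_comm]

lemma continuous_comp_of_finite_range {X Y W : Type*} [TopologicalSpace X] [TopologicalSpace Y]
    [T1Space Y] [TopologicalSpace W] {f : X → Y} (hf : Continuous f)
    (hfin : (Set.range f).Finite) (g : Y → W) : Continuous (g ∘ f) := by
  have hfiber : ∀ y : Y, IsOpen (f ⁻¹' {y}) := by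
    intro y
    have hcl : IsClosed (f ⁻¹' (range f \ {y})) :=
      ((hfin.subset diff_subset).isClosed).preimage hf
    have : f ⁻¹' {y} = (f ⁻¹' (range f \ {y}))ᶜ := by
      ext x
      simp only [mem_preimage, mem_singleton_iff, mem_compl_iff, mem_diff, mem_range]
      constructor
      · rintro rfl h; exact h.2 rfl
      · intro h; by_contra hne; exact h ⟨⟨x, rfl⟩, hne⟩
    rw [this]
    exact hcl.isOpen_compl
  rw [continuous_def]
  intro s _
  have : (g ∘ f) ⁻¹' s = ⋃ y : {y : Y // y ∈ range f ∧ g y ∈ s}, f ⁻¹' {y.1} := by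
    ext x
    simp only [mem_preimage, comp_apply, mem_iUnion, mem_singleton_iff]
    constructor
    · intro hx; exact ⟨⟨f x, ⟨x, rfl⟩, hx⟩, rfl⟩
    · rintro ⟨⟨y, hy, hs⟩, rfl⟩; exact hs
  rw [this]
  exact isOpen_iUnion fun y => hfiber y.1

variable {Z : Type} [AddCommGroup Z] [TopologicalSpace Z] [IsTopologicalAddGroup Z]
  [CompactSpace Z]

/-- Core cyclic division lemma. -/
lemma cyc_div
    (hdual : ∀ χ : Z →+ AddCircle (1 : ℝ), Continuous χ → ∀ n : ℕ, 1 ≤ n →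
      ∃ χ' : Z →+ AddCircle (1 : ℝ), Continuous χ' ∧ n • χ' = χ)
    {A : Type} [AddCommGroup A] [TopologicalSpace A]
    (hA : ∀ (a : A) (n : ℕ), 1 ≤ n → ∃ a' : A, n • a' = a)
    (d : ℕ) (hd : 1 ≤ d) (iA : ZMod d →+ A) (ξ : Z →+ ZMod d)
    (hξ : ∀ (T : Type) (_ : TopologicalSpace T) (w : ZMod d → T), Continuous fun z => w (ξ z))
    (n : ℕ) (hn : 1 ≤ n) :
    ∃ χ' : Z →+ A, Continuous χ' ∧ n • χ' = iA.comp ξ := by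
  classical
  set N : ℕ := n * d with hNdef
  have hN : 0 < N := Nat.mul_pos hn hd
  have hNR : (N : ℝ) ≠ 0 := Nat.cast_ne_zero.2 hN.ne'
  have hdR : (d : ℝ) ≠ 0 := Nat.cast_ne_zero.2 (Nat.pos_of_ne_zero (by omega)).ne'
  set c₀ : AddCircle (1 : ℝ) := (((N : ℝ)⁻¹ : ℝ) : AddCircle (1 : ℝ)) with hc₀
  set c₁ : AddCircle (1 : ℝ) := (((d : ℝ)⁻¹ : ℝ) : AddCircle (1 : ℝ)) with hc₁
  have fact1 : ∀ x : AddCircle (1 : ℝ), (N : ℤ) • x = 0 → ∃ k : ℤ, x = k • c₀ := by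
    intro x hx
    refine QuotientAddGroup.induction_on x (fun r hr => ?_) hx
    rw [← AddCircle.coe_zsmul, AddCircle.coe_eq_zero_iff] at hr
    obtain ⟨m, hm⟩ := hr
    refine ⟨m, ?_⟩
    rw [← AddCircle.coe_zsmul]
    congr 1
    have hm' : (m : ℝ) = (N : ℤ) • r := by simpa [zsmul_eq_mul] using hm
    rw [zsmul_eq_mul] at hm' ⊢
    field_simp at hm' ⊢
    push_cast at hm' ⊢
    linarith
  have fact2 : ∀ k : ℤ, k • c₀ = 0 → (N : ℤ) ∣ k := by
    intro k hk
    rw [hc₀, ← AddCircle.coe_zsmul, AddCircle.coe_eq_zero_iff] at hk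
    obtain ⟨m, hm⟩ := hk
    rw [zsmul_eq_mul, zsmul_eq_mul, mul_one] at hm
    refine ⟨m, ?_⟩
    have h1 : (k : ℝ) = m * N := by
      field_simp at hm
      linarith
    have h2 : (k : ℝ) = (N : ℤ) * m := by rw [h1]; push_cast; ring
    exact_mod_cast h2
  have hnR : (n : ℝ) ≠ 0 := Nat.cast_ne_zero.2 (by omega)
  have fact3 : (N : ℤ) • c₀ = 0 := by
    rw [hc₀, ← AddCircle.coe_zsmul]
    rw [zsmul_eq_mul, Int.cast_natCast, mul_inv_cancel₀ hNR]
    exact AddCircle.coe_period _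
  have fact4 : (n : ℤ) • c₀ = c₁ := by
    rw [hc₀, hc₁, ← AddCircle.coe_zsmul]
    congr 1
    rw [zsmul_eq_mul, Int.cast_natCast, hNdef]
    push_cast
    rw [mul_inv, ← mul_assoc, mul_inv_cancel₀ hnR, one_mul]
  have factd : (d : ℤ) • c₁ = 0 := by
    rw [hc₁, ← AddCircle.coe_zsmul, zsmul_eq_mul, Int.cast_natCast, mul_inv_cancel₀ hdR]
    exact AddCircle.coe_period _
  set c : ZMod d →+ AddCircle (1 : ℝ) := ZMod.lift d ⟨zmultiplesHom _ c₁, by simpa using factd⟩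
    with hc
  have hc_int : ∀ j : ℤ, c ((j : ℤ) : ZMod d) = j • c₁ := by
    intro j; rw [hc, ZMod.lift_coe]; simp
  have hcinj : ∀ x : ZMod d, c x = 0 → x = 0 := by
    intro x hx
    obtain ⟨j, rfl⟩ := ZMod.intCast_surjective x
    rw [hc_int] at hx
    rw [ZMod.intCast_zmod_eq_zero_iff_dvd]
    rw [hc₁, ← AddCircle.coe_zsmul, AddCircle.coe_eq_zero_iff] at hx
    obtain ⟨m, hm⟩ := hx
    rw [zsmul_eq_mul, zsmul_eq_mul, mul_one] at hm
    refine ⟨m, ?_⟩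
    have h1 : (j : ℝ) = m * d := by
      field_simp at hm
      linarith
    have h2 : (j : ℝ) = (d : ℤ) * m := by rw [h1]; push_cast; ring
    exact_mod_cast h2
  set ψ : Z →+ AddCircle (1 : ℝ) := c.comp ξ with hψ
  have hψc : Continuous ψ := hξ _ _ (fun x => c x)
  obtain ⟨ψ', hψ'c, hψ'n⟩ := hdual ψ hψc n hn
  have hψ'val : ∀ z, n • ψ' z = ψ z := by
    intro z
    rw [← hψ'n]
    rfl
  have htor : ∀ z, (N : ℤ) • ψ' z = 0 := by
    intro z
    have : (N : ℤ) • ψ' z = d • (n • ψ' z) := by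
      rw [natCast_zsmul, hNdef, mul_comm, mul_smul]
    rw [this, hψ'val]
    show d • c (ξ z) = 0
    rw [← map_nsmul]
    have : d • ξ z = 0 := by
      rw [nsmul_eq_mul, ZMod.natCast_self, zero_mul]
    rw [this, map_zero]
  obtain ⟨a, ha⟩ := hA (iA 1) n hn
  have hNa : (N : ℤ) • a = 0 := by
    have : (N : ℤ) • a = d • (n • a) := by
      rw [natCast_zsmul, hNdef, mul_comm, mul_smul]
    rw [this, ha, ← map_nsmul]
    have : d • (1 : ZMod d) = 0 := by
      rw [nsmul_eq_mul, ZMod.natCast_self, mul_one]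
    rw [this, map_zero]
  have hka : ∀ k : ℤ, k • c₀ = 0 → k • a = 0 := by
    intro k hk
    obtain ⟨m, hm⟩ := fact2 k hk
    rw [hm, mul_comm, mul_smul, hNa, smul_zero]
  set ρ : AddCircle (1 : ℝ) → A := fun x =>
    if h : ∃ k : ℤ, x = k • c₀ then Classical.choose h • a else 0 with hρdef
  have hρ : ∀ (x : AddCircle (1 : ℝ)) (k : ℤ), x = k • c₀ → ρ x = k • a := by
    intro x k hx
    rw [hρdef]
    simp only
    rw [dif_pos ⟨k, hx⟩]
    set k' := Classical.choose (⟨k, hx⟩ : ∃ k : ℤ, x = k • c₀) with hk'def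
    have hk' : x = k' • c₀ := Classical.choose_spec (⟨k, hx⟩ : ∃ k : ℤ, x = k • c₀)
    have h0 : (k' - k) • c₀ = 0 := by
      rw [sub_zsmul, ← hk', ← hx]
      abel
    have h1 : (k' - k) • a = 0 := hka _ h0
    rw [sub_zsmul] at h1
    exact add_neg_eq_zero.mp h1
  have hfib : ∀ z, ∃ k : ℤ, ψ' z = k • c₀ := fun z => fact1 _ (htor z)
  have hadd : ∀ z w : Z, ρ (ψ' (z + w)) = ρ (ψ' z) + ρ (ψ' w) := by
    intro z w
    obtain ⟨kz, hz⟩ := hfib z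
    obtain ⟨kw, hw⟩ := hfib w
    have hzw : ψ' (z + w) = (kz + kw) • c₀ := by
      rw [map_add, hz, hw, add_zsmul]
    rw [hρ _ _ hzw, hρ _ _ hz, hρ _ _ hw, add_zsmul]
  set χ' : Z →+ A := AddMonoidHom.mk' (fun z => ρ (ψ' z)) hadd with hχ'
  have hcont : Continuous χ' := by
    have hrange : (Set.range ψ').Finite := by
      apply Set.Finite.subset ((Set.finite_Iio N).image (fun k : ℕ => (k : ℤ) • c₀))
      rintro x ⟨z, rfl⟩
      obtain ⟨k, hk⟩ := hfib z
      refine ⟨(k % N).toNat, ?_, ?_⟩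
      · have h1 : k % (N : ℤ) < N := Int.emod_lt_of_pos k (by exact_mod_cast hN)
        have h2 : 0 ≤ k % (N : ℤ) := Int.emod_nonneg k (by exact_mod_cast hN.ne')
        simp only [mem_Iio]
        omega
      · have h2 : 0 ≤ k % (N : ℤ) := Int.emod_nonneg k (by exact_mod_cast hN.ne')
        show (((k % (N : ℤ)).toNat : ℤ)) • c₀ = ψ' z
        rw [Int.toNat_of_nonneg h2]
        rw [hk]
        conv_rhs => rw [← Int.mul_ediv_add_emod k N]
        rw [add_zsmul, mul_comm, mul_smul, fact3, smul_zero, zero_add]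
    exact continuous_comp_of_finite_range hψ'c hrange ρ
  refine ⟨χ', hcont, ?_⟩
  ext z
  have happ : (n • χ') z = n • χ' z := rfl
  obtain ⟨k, hk⟩ := hfib z
  have hξz : ξ z = k • (1 : ZMod d) := by
    have h1 : c (ξ z) = k • c₁ := by
      show ψ z = k • c₁
      rw [← hψ'val z, hk, nz_smul_comm, ← natCast_zsmul c₀, fact4]
    have h2 : c (k • (1 : ZMod d)) = k • c₁ := by
      rw [map_zsmul]
      congr 1
      have : (1 : ZMod d) = ((1 : ℤ) : ZMod d) := by norm_cast
      rw [this, hc_int]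
      simp
    have h3 : c (ξ z - k • (1 : ZMod d)) = 0 := by
      rw [map_sub, h1, h2, sub_self]
    have := hcinj _ h3
    rwa [sub_eq_zero] at this
  rw [happ, hχ']
  show n • ρ (ψ' z) = iA (ξ z)
  rw [hρ _ _ hk, nz_smul_comm, ha, hξz, map_zsmul]

/-- division of continuous homomorphisms into a discrete divisible group -/
lemma hom_div
    (hdual : ∀ χ : Z →+ AddCircle (1 : ℝ), Continuous χ → ∀ n : ℕ, 1 ≤ n →
      ∃ χ' : Z →+ AddCircle (1 : ℝ), Continuous χ' ∧ n • χ' = χ)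
    {A : Type} [AddCommGroup A] [TopologicalSpace A] [DiscreteTopology A]
    (hA : ∀ (a : A) (n : ℕ), 1 ≤ n → ∃ a' : A, n • a' = a)
    (χ : Z →+ A) (hχ : Continuous χ) (n : ℕ) (hn : 1 ≤ n) :
    ∃ χ' : Z →+ A, Continuous χ' ∧ n • χ' = χ := by
  classical
  set F : AddSubgroup A := χ.range with hF
  have hFfin : Finite F := by
    have h1 : (Set.range χ).Finite := by
      have := isCompact_univ.image hχ
      simpa [Set.image_univ] using this.finite_of_discrete
    exact h1.to_subtype
  obtain ⟨ι, hι, dfun, hd, ⟨e⟩⟩ := AddCommGroup.equiv_directSum_zmod_of_finite' F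
  -- components
  set χF : Z →+ F := χ.rangeRestrict with hχF
  set ξ : ∀ i : ι, Z →+ ZMod (dfun i) := fun i =>
    (DFinsupp.evalAddMonoidHom i).comp (e.toAddMonoidHom.comp χF) with hξdef
  set iA : ∀ i : ι, ZMod (dfun i) →+ A := fun i =>
    F.subtype.comp (e.symm.toAddMonoidHom.comp (DirectSum.of (fun i => ZMod (dfun i)) i))
    with hiAdef
  have hfac : ∀ i : ι, ∃ u : A → ZMod (dfun i), ∀ z, ξ i z = u (χ z) := by
    intro i
    refine ⟨fun a => if h : a ∈ F then e ⟨a, h⟩ i else 0, fun z => ?_⟩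
    have hmem : χ z ∈ F := ⟨z, rfl⟩
    show ξ i z = if h : χ z ∈ F then (e ⟨χ z, h⟩) i else 0
    rw [dif_pos hmem]
    rfl
  have hcont : ∀ (i : ι) (T : Type) (_ : TopologicalSpace T) (w : ZMod (dfun i) → T),
      Continuous fun z => w (ξ i z) := by
    intro i T tT w
    obtain ⟨u, hu⟩ := hfac i
    have : (fun z => w (ξ i z)) = (fun a => w (u a)) ∘ χ := by
      funext z; simp [hu z]
    rw [this]
    exact (continuous_of_discreteTopology (f := fun a => w (u a))).comp hχ
  have hpiece : ∀ i : ι, ∃ χ' : Z →+ A, Continuous χ' ∧ n • χ' = (iA i).comp (ξ i) := by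
    intro i
    exact cyc_div hdual hA (dfun i) (le_of_lt (hd i)) (iA i) (ξ i) (hcont i) n hn
  choose χ' hχ'c hχ'n using hpiece
  refine ⟨∑ i : ι, χ' i, ?_, ?_⟩
  · have : ((∑ i : ι, χ' i : Z →+ A) : Z → A) = fun z => ∑ i : ι, χ' i z := by
      funext z
      exact AddMonoidHom.finset_sum_apply _ _ z
    rw [this]
    exact continuous_finset_sum _ fun i _ => hχ'c i
  · ext z
    have h0 : n • (∑ i : ι, χ' i) = ∑ i : ι, n • χ' i := Finset.smul_sum
    have h1 : (n • ∑ i : ι, χ' i) z = ∑ i : ι, (n • χ' i) z := by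
      rw [h0, AddMonoidHom.finset_sum_apply]
    rw [h1]
    have h2 : ∀ i : ι, (n • χ' i) z = iA i (ξ i z) := fun i => by rw [hχ'n i]; rfl
    simp only [h2]
    -- reconstruct
    have h3 : ∑ i : ι, iA i (ξ i z) = F.subtype (e.symm (∑ i : ι,
        DirectSum.of (fun i => ZMod (dfun i)) i ((e (χF z)) i))) := by
      rw [map_sum, map_sum]
      rfl
    rw [h3, DirectSum.sum_univ_of, e.symm_apply_apply]
    rfl


end L3


section DIV

variable (Z : Type) [AddCommGroup Z] [TopologicalSpace Z] [IsTopologicalAddGroup Z]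
  [CompactSpace Z]

/-- The additive group of continuous homomorphisms `Z →+ A`. -/
def contHomGroup (A : Type) [AddCommGroup A] [TopologicalSpace A] [IsTopologicalAddGroup A] :
    AddSubgroup (Z →+ A) where
  carrier := {χ | Continuous χ}
  add_mem' {χ ψ} hχ hψ := by
    have : ((χ + ψ : Z →+ A) : Z → A) = fun z => χ z + ψ z := rfl
    show Continuous (χ + ψ : Z →+ A); rw [this]; exact hχ.add hψ
  zero_mem' := by
    have : ((0 : Z →+ A) : Z → A) = fun _ => 0 := rfl
    simpa [Set.mem_setOf_eq, this] using continuous_const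
  neg_mem' {χ} hχ := by
    have : ((-χ : Z →+ A) : Z → A) = fun z => -(χ z) := rfl
    show Continuous (-χ : Z →+ A); rw [this]; exact hχ.neg

/-- The inductive divisibility lemma. -/
lemma ML.div
    (hdual : ∀ χ : Z →+ AddCircle (1 : ℝ), Continuous χ → ∀ n : ℕ, 1 ≤ n →
      ∃ χ' : Z →+ AddCircle (1 : ℝ), Continuous χ' ∧ n • χ' = χ)
    (k : ℕ) :
    ∀ (A : Type) [AddCommGroup A] [TopologicalSpace A] [DiscreteTopology A],
      (∀ (a : A) (n : ℕ), 1 ≤ n → ∃ a' : A, n • a' = a) →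
      ∀ b : (Fin k → Z) → A, Continuous b → IsMultilinear b →
        ∀ n : ℕ, 1 ≤ n →
          ∃ b' : (Fin k → Z) → A, Continuous b' ∧ IsMultilinear b' ∧ n • b' = b := by
  induction k with
  | zero =>
    intro A _ _ _ hA b _ _ n hn
    obtain ⟨a', ha'⟩ := hA (b (fun i => i.elim0)) n hn
    refine ⟨fun _ => a', continuous_const, fun i => i.elim0, ?_⟩
    funext g
    have hg : g = fun i => i.elim0 := Subsingleton.elim _ _
    rw [Pi.smul_apply, hg, ha']
  | succ k ih =>
    intro A _ _ _ hA b hbc hb n hn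
    obtain ⟨U, hUo, hUinv⟩ := ML.exists_open_subgroup (Z := Z) hbc hb
    haveI : IsTopologicalAddGroup A := by
      constructor <;> exact continuous_of_discreteTopology
    set H := contHomGroup Z A with hHdef
    letI : TopologicalSpace H := ⊥
    haveI : DiscreteTopology H := ⟨rfl⟩
    have hH : ∀ (a : H) (n : ℕ), 1 ≤ n → ∃ a' : H, n • a' = a := by
      rintro ⟨χ, hχ⟩ m hm
      obtain ⟨χ', hχ'c, hχ'n⟩ := hom_div hdual hA χ hχ m hm
      exact ⟨⟨χ', hχ'c⟩, Subtype.ext hχ'n⟩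
    -- curry the last coordinate
    have hsnoccont : ∀ g : Fin k → Z, Continuous fun z : Z => (Fin.snoc g z : Fin (k+1) → Z) := by
      intro g
      refine continuous_pi fun i => ?_
      refine Fin.lastCases ?_ (fun j => ?_) i
      · simpa [Fin.snoc_last] using continuous_id'
      · simpa [Fin.snoc_castSucc] using continuous_const
    set B : (Fin k → Z) → H := fun g =>
      ⟨AddMonoidHom.mk' (fun z => b (Fin.snoc g z)) (fun x y => by
          have h1 := hb (Fin.last k) (Fin.snoc g x) x y
          rwa [Fin.update_snoc_last, Fin.update_snoc_last, Fin.update_snoc_last] at h1),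
        by
          show Continuous fun z => b (Fin.snoc g z)
          exact hbc.comp (hsnoccont g)⟩ with hBdef
    have hBval : ∀ (g : Fin k → Z) (z : Z), (B g : Z →+ A) z = b (Fin.snoc g z) := fun _ _ => rfl
    have hBeq : ∀ g g' : Fin k → Z, (∀ i, g i - g' i ∈ U) → B g = B g' := by
      intro g g' hgg
      apply Subtype.ext
      apply AddMonoidHom.ext
      intro z
      refine hUinv _ _ fun i => ?_
      refine Fin.lastCases ?_ (fun j => ?_) i
      · simpa [Fin.snoc_last] using U.zero_mem
      · simpa [Fin.snoc_castSucc] using hgg j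
    have hBcont : Continuous B := by
      rw [continuous_def]
      intro S _
      rw [isOpen_iff_forall_mem_open]
      intro g₀ hg₀
      refine ⟨⋂ i : Fin k, (fun g : Fin k → Z => g i - g₀ i) ⁻¹' U, ?_, ?_, ?_⟩
      · intro g hg
        have : B g = B g₀ := hBeq g g₀ (fun i => by
          simpa using mem_iInter.1 hg i)
        show B g ∈ S
        rw [this]; exact hg₀
      · exact isOpen_iInter_of_finite fun i =>
          hUo.preimage ((continuous_apply i).sub continuous_const)
      · exact mem_iInter.2 fun i => by simpa using U.zero_mem
    have hBmult : IsMultilinear B := by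
      intro i g x y
      apply Subtype.ext
      apply AddMonoidHom.ext
      intro z
      show b (Fin.snoc (update g i (x + y)) z)
          = b (Fin.snoc (update g i x) z) + b (Fin.snoc (update g i y) z)
      rw [Fin.snoc_update, Fin.snoc_update, Fin.snoc_update]
      exact hb i.castSucc (Fin.snoc g z) x y
    obtain ⟨B', hB'c, hB'm, hB'n⟩ := ih ↥H hH B hBcont hBmult n hn
    set b' : (Fin (k+1) → Z) → A :=
      fun g => (B' (Fin.init g) : Z →+ A) (g (Fin.last k)) with hb'def
    have hinitcont : Continuous fun g : Fin (k+1) → Z => Fin.init g :=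
      continuous_pi fun i => continuous_apply i.castSucc
    refine ⟨b', ?_, ?_, ?_⟩
    · rw [continuous_iff_continuousAt]
      intro g₀
      have hW : IsOpen (B' ⁻¹' {B' (Fin.init g₀)}) :=
        (isOpen_discrete _).preimage hB'c
      have hO : IsOpen ((fun g : Fin (k+1) → Z => Fin.init g) ⁻¹' (B' ⁻¹' {B' (Fin.init g₀)})) :=
        hW.preimage hinitcont
      have hmem : g₀ ∈ (fun g : Fin (k+1) → Z => Fin.init g) ⁻¹' (B' ⁻¹' {B' (Fin.init g₀)}) :=
        rfl
      have heq : b' =ᶠ[nhds g₀]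
          fun g => (B' (Fin.init g₀) : Z →+ A) (g (Fin.last k)) := by
        refine Filter.eventuallyEq_of_mem (hO.mem_nhds hmem) ?_
        intro g hg
        have : B' (Fin.init g) = B' (Fin.init g₀) := hg
        rw [hb'def]
        simp only [this]
      have hc : ContinuousAt (fun g : Fin (k+1) → Z =>
          (B' (Fin.init g₀) : Z →+ A) (g (Fin.last k))) g₀ :=
        ((B' (Fin.init g₀)).2.comp (continuous_apply (Fin.last k))).continuousAt
      exact hc.congr heq.symm
    · intro i g x y
      refine Fin.lastCases ?_ (fun j => ?_) i
      · rw [hb'def]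
        simp only [Fin.init_update_last, Function.update_self]
        exact (B' (Fin.init g) : Z →+ A).map_add x y
      · rw [hb'def]
        have hupd : ∀ t : Z, update g j.castSucc t (Fin.last k) = g (Fin.last k) :=
          fun t => Function.update_of_ne (Fin.castSucc_lt_last j).ne' t g
        simp only [Fin.init_update_castSucc, hupd]
        have h := hB'm j (Fin.init g) x y
        have happ : ∀ X Y : ↥H, ((X + Y : ↥H) : Z →+ A) (g (Fin.last k))
            = (X : Z →+ A) (g (Fin.last k)) + (Y : Z →+ A) (g (Fin.last k)) := fun X Y => rfl
        rw [h, happ]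
    · funext g
      have h := congrFun hB'n (Fin.init g)
      rw [Pi.smul_apply] at h
      have hval : ((n • B' (Fin.init g) : ↥H) : Z →+ A) = n • (B' (Fin.init g) : Z →+ A) :=
        by simpa using map_nsmul H.subtype (B' (Fin.init g)) n
      calc (n • b') g = n • ((B' (Fin.init g) : Z →+ A) (g (Fin.last k))) := rfl
        _ = (n • (B' (Fin.init g) : Z →+ A)) (g (Fin.last k)) := rfl
        _ = ((n • B' (Fin.init g) : ↥H) : Z →+ A) (g (Fin.last k)) := by rw [hval]
        _ = ((B (Fin.init g) : ↥H) : Z →+ A) (g (Fin.last k)) := by rw [h]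
        _ = b (Fin.snoc (Fin.init g) (g (Fin.last k))) := rfl
        _ = b g := by rw [Fin.snoc_init_self]


end DIV


/-- Let `Z` be a compact metrizable abelian topological group whose Pontryagin dual is
divisible, let `A` be a countable discrete divisible abelian group, and let `k ≥ 1`.
Then the group `ML_k(Z,A)` of continuous multilinear maps `Z^k → A` is countable and
divisible. -/
theorem continuous_multilinear_countable_divisible
    (Z : Type) [AddCommGroup Z] [TopologicalSpace Z] [IsTopologicalAddGroup Z]
    [CompactSpace Z] [TopologicalSpace.MetrizableSpace Z]
    (hdual : ∀ χ : Z →+ AddCircle (1 : ℝ), Continuous χ → ∀ n : ℕ, 1 ≤ n →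
      ∃ χ' : Z →+ AddCircle (1 : ℝ), Continuous χ' ∧ n • χ' = χ)
    (A : Type) [AddCommGroup A] [Countable A] [TopologicalSpace A] [DiscreteTopology A]
    (hA : ∀ (a : A) (n : ℕ), 1 ≤ n → ∃ a' : A, n • a' = a)
    (k : ℕ) (hk : 1 ≤ k) :
    Countable {b : (Fin k → Z) → A // Continuous b ∧ IsMultilinear b} ∧
      ∀ b : (Fin k → Z) → A, Continuous b → IsMultilinear b →
        ∀ n : ℕ, 1 ≤ n →
          ∃ b' : (Fin k → Z) → A, Continuous b' ∧ IsMultilinear b' ∧ n • b' = b := by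
  constructor
  · haveI := countable_continuous_to_discrete (Fin k → Z) A
    have hinj : Function.Injective
        (fun x : {b : (Fin k → Z) → A // Continuous b ∧ IsMultilinear b} =>
          (⟨x.1, x.2.1⟩ : {f : (Fin k → Z) → A // Continuous f})) := by
      intro x y h
      have := congrArg (fun t : {f : (Fin k → Z) → A // Continuous f} => t.1) h
      exact Subtype.ext this
    exact hinj.countable
  · intro b hbc hbm n hn
    exact ML.div Z hdual k A hA b hbc hbm n hn
end

section
/- Let Z be a compact metrizable abelian topological group whose Pontryagin dual is divisible, and let A be either a countable discrete divisible abelian group or the circle group ℝ/ℤ. Then for every k ≥ 1 the abelian group SML_k(Z,A) of continuous symmetric multilinear maps from Z^k to A is divisible. -/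
/-- `b : Z^k → A` is symmetric if it is invariant under all permutations of its arguments. -/
def IsSymmetric {Z A : Type*} {k : ℕ} (b : (Fin k → Z) → A) : Prop :=
  ∀ (σ : Equiv.Perm (Fin k)) (g : Fin k → Z), b (g ∘ σ) = b g

section Helpers

variable {Z : Type} [AddCommGroup Z] {A : Type} [AddCommGroup A] {k : ℕ}

/-- The slice of a multilinear map in one coordinate, as an additive homomorphism. -/
private def sliceHom (b : (Fin k → Z) → A) (hml : IsMultilinear b) (g : Fin k → Z) (i : Fin k) :
    Z →+ A :=
  AddMonoidHom.mk' (fun x => b (Function.update g i x)) (hml i g)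

private lemma sliceHom_apply (b : (Fin k → Z) → A) (hml : IsMultilinear b) (g : Fin k → Z)
    (i : Fin k) (x : Z) : sliceHom b hml g i x = b (Function.update g i x) := rfl

private lemma ml_update_zero (b : (Fin k → Z) → A) (hml : IsMultilinear b) (g : Fin k → Z)
    (i : Fin k) : b (Function.update g i 0) = 0 :=
  (sliceHom b hml g i).map_zero

/-- Package a multilinear map as a `MultilinearMap` over `ℤ`. -/
private noncomputable def toML (b : (Fin k → Z) → A) (hml : IsMultilinear b) :
    MultilinearMap ℤ (fun _ : Fin k => Z) A where
  toFun := b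
  map_update_add' := by
    intro dec g i x y
    obtain rfl := Subsingleton.elim dec (instDecidableEqFin k)
    exact hml i g x y
  map_update_smul' := by
    intro dec g i r x
    obtain rfl := Subsingleton.elim dec (instDecidableEqFin k)
    exact (sliceHom b hml g i).map_zsmul r x

private lemma toML_apply (b : (Fin k → Z) → A) (hml : IsMultilinear b) (g : Fin k → Z) :
    toML b hml g = b g := rfl

/-- A multilinear map vanishing whenever a coordinate lies in a subgroup `W` only depends on
the coordinates mod `W`. -/
private lemma ml_congr_mod (b : (Fin k → Z) → A) (hml : IsMultilinear b) (W : AddSubgroup Z)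
    (hW : ∀ (g : Fin k → Z) (i : Fin k), g i ∈ W → b g = 0)
    (g h : Fin k → Z) (hgh : ∀ i, g i - h i ∈ W) : b g = b h := by
  classical
  have key : ∀ s : Finset (Fin k), b (fun i => if i ∈ s then h i else g i) = b g := by
    intro s
    induction s using Finset.induction_on with
    | empty => simp
    | @insert j s hj ih =>
      have hupd : (fun i => if i ∈ insert j s then h i else g i)
          = Function.update (fun i => if i ∈ s then h i else g i) j (h j) := by
        funext i
        rcases eq_or_ne i j with rfl | hij
        · simp
        · simp [Function.update_of_ne hij, hij]
      rw [hupd, show h j = g j + (h j - g j) by abel, hml j _ (g j) (h j - g j)]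
      have h2 : Function.update (fun i => if i ∈ s then h i else g i) j (g j)
          = fun i => if i ∈ s then h i else g i := by
        funext i
        rcases eq_or_ne i j with rfl | hij
        · simp [hj]
        · simp [Function.update_of_ne hij]
      have h3 : b (Function.update (fun i => if i ∈ s then h i else g i) j (h j - g j)) = 0 := by
        refine hW _ j ?_
        rw [Function.update_self]
        simpa [neg_sub] using W.neg_mem (hgh j)
      rw [h2, h3, add_zero, ih]
  have := key Finset.univ
  simpa using this.symm

/-- A function on `Z^k` constant on coordinatewise cosets of an open subgroup is continuous. -/
private lemma continuous_of_coset_const {X : Type*} [TopologicalSpace X]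
    [TopologicalSpace Z] [IsTopologicalAddGroup Z]
    (V : AddSubgroup Z) (hV : IsOpen (V : Set Z)) (f : (Fin k → Z) → X)
    (hf : ∀ g h : Fin k → Z, (∀ i, g i - h i ∈ V) → f g = f h) : Continuous f := by
  rw [continuous_def]
  intro S _
  rw [isOpen_iff_mem_nhds]
  intro g hg
  have hT : IsOpen {h : Fin k → Z | ∀ i, h i - g i ∈ V} := by
    have : {h : Fin k → Z | ∀ i, h i - g i ∈ V}
        = ⋂ i, (fun h : Fin k → Z => h i - g i) ⁻¹' (V : Set Z) := by
      ext h; simp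
    rw [this]
    exact isOpen_iInter_of_finite fun i =>
      hV.preimage ((continuous_apply i).sub continuous_const)
  refine Filter.mem_of_superset (hT.mem_nhds ?_) ?_
  · intro i; rw [sub_self]; exact V.zero_mem
  · intro h hh
    have : f h = f g := hf h g hh
    simpa [Set.mem_preimage, this] using hg

/-- One-variable version. -/
private lemma continuous_of_coset_const₁ {X : Type*} [TopologicalSpace X]
    [TopologicalSpace Z] [IsTopologicalAddGroup Z]
    (V : AddSubgroup Z) (hV : IsOpen (V : Set Z)) (f : Z → X)
    (hf : ∀ g h : Z, g - h ∈ V → f g = f h) : Continuous f := by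
  rw [continuous_def]
  intro S _
  rw [isOpen_iff_mem_nhds]
  intro g hg
  have hT : IsOpen {h : Z | h - g ∈ V} :=
    hV.preimage (continuous_id.sub continuous_const)
  refine Filter.mem_of_superset (hT.mem_nhds (by show g - g ∈ V; rw [sub_self]; exact V.zero_mem)) ?_
  intro h hh
  have : f h = f g := hf h g hh
  simpa [Set.mem_preimage, this] using hg

private lemma coe_nsmul_circ (n : ℕ) (r : ℝ) :
    ((n • r : ℝ) : AddCircle (1 : ℝ)) = n • (r : AddCircle (1 : ℝ)) := rfl

private lemma coe_sub_circ (r s : ℝ) :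
    ((r - s : ℝ) : AddCircle (1 : ℝ)) = (r : AddCircle (1 : ℝ)) - (s : AddCircle (1 : ℝ)) := rfl

/-- Torsion points of the circle of order dividing `N` come from `ZMod N`. -/
private lemma addCircle_torsion {N : ℕ} [NeZero N] (x : AddCircle (1 : ℝ)) (hx : N • x = 0) :
    ∃ j : ZMod N, x = ZMod.toAddCircle j := by
  obtain ⟨t, rfl⟩ := QuotientAddGroup.mk_surjective x
  have hN : (N : ℝ) ≠ 0 := Nat.cast_ne_zero.mpr (NeZero.ne N)
  have h1 : ((N • t : ℝ) : AddCircle (1 : ℝ)) = 0 := by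
    rw [coe_nsmul_circ]; exact hx
  obtain ⟨z, hz⟩ := (AddCircle.coe_eq_zero_iff _).mp h1
  refine ⟨(z : ZMod N), ?_⟩
  rw [ZMod.toAddCircle_intCast]
  have : t = (z : ℝ) / N := by
    have hz' : (z : ℝ) = N * t := by
      have := hz
      rw [zsmul_eq_mul, mul_one] at this
      rw [this, nsmul_eq_mul]
    rw [hz']
    field_simp
  rw [this]

/-- The circle has no small subgroups: an element all whose multiples have norm `< 1/4`
is zero. -/
private lemma addCircle_eq_zero_of_small (x : AddCircle (1 : ℝ))
    (hx : ∀ m : ℕ, ‖m • x‖ < 4⁻¹) : x = 0 := by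
  obtain ⟨s, rfl⟩ := QuotientAddGroup.mk_surjective x
  set t := s - round s with ht
  have hnorm : ∀ u : ℝ, |u| < 2⁻¹ → ‖(u : AddCircle (1 : ℝ))‖ = |u| := by
    intro u hu
    have hround : round u = 0 := by
      rw [round_eq, Int.floor_eq_zero_iff]
      obtain ⟨h1, h2⟩ := abs_lt.mp hu
      constructor <;> simp <;> linarith
    rw [AddCircle.norm_eq]
    simp [hround]
  have hst : ((s : ℝ) : AddCircle (1 : ℝ)) = ((t : ℝ) : AddCircle (1 : ℝ)) := by
    have h0 : ((s - t : ℝ) : AddCircle (1 : ℝ)) = 0 := by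
      rw [show s - t = ((round s : ℤ) : ℝ) by rw [ht]; ring]
      exact (AddCircle.coe_eq_zero_iff _).mpr ⟨round s, by simp⟩
    exact sub_eq_zero.mp (by rw [← coe_sub_circ]; exact h0)
  have hsmul : ∀ m : ℕ, (m • (((s : ℝ)) : AddCircle (1 : ℝ))) = (((m : ℝ) * t : ℝ) : AddCircle (1 : ℝ)) := by
    intro m
    rw [hst, ← coe_nsmul_circ]
    congr 1
    rw [nsmul_eq_mul]
  have key : ∀ j : ℕ, |(2 : ℝ) ^ j * t| < 4⁻¹ := by
    intro j
    induction j with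
    | zero =>
      have h1 := hx 1
      rw [one_smul] at h1
      have h2 : ‖((s : ℝ) : AddCircle (1 : ℝ))‖ = |t| := by
        rw [AddCircle.norm_eq]; simp [ht]
      rw [h2] at h1
      simpa using h1
    | succ j ih =>
      have habs : |(2 : ℝ) ^ (j + 1) * t| < 2⁻¹ := by
        have : (2 : ℝ) ^ (j + 1) * t = 2 * ((2 : ℝ) ^ j * t) := by ring
        rw [this, abs_mul, abs_two]
        nlinarith [abs_nonneg ((2 : ℝ) ^ j * t)]
      have h1 := hx (2 ^ (j + 1))
      rw [hsmul (2 ^ (j + 1))] at h1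
      have hcast : ((2 ^ (j + 1) : ℕ) : ℝ) = (2 : ℝ) ^ (j + 1) := by push_cast; ring
      rw [hcast] at h1
      rwa [hnorm _ habs] at h1
  have ht0 : t = 0 := by
    by_contra ht0
    have htpos : 0 < |t| := abs_pos.mpr ht0
    obtain ⟨j, hj⟩ := pow_unbounded_of_one_lt (4⁻¹ / |t|) (one_lt_two (α := ℝ))
    have : 4⁻¹ < (2 : ℝ) ^ j * |t| := by
      rw [div_lt_iff₀ htpos] at hj
      linarith
    have h2 : |(2 : ℝ) ^ j * t| = (2 : ℝ) ^ j * |t| := by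
      rw [abs_mul, abs_of_pos (by positivity)]
    have := key j
    rw [h2] at this
    linarith
  rw [hst, ht0]
  simp

/-- Division on the circle. -/
private lemma addCircle_div (a : AddCircle (1 : ℝ)) (n : ℕ) (hn : 1 ≤ n) :
    ∃ a' : AddCircle (1 : ℝ), n • a' = a := by
  obtain ⟨t, rfl⟩ := QuotientAddGroup.mk_surjective a
  refine ⟨((t / n : ℝ) : AddCircle (1 : ℝ)), ?_⟩
  rw [← coe_nsmul_circ]
  congr 1
  rw [nsmul_eq_mul]
  field_simp

/-- Build an open subgroup `W` on which `b` vanishes slotwise, from per-slot open sets. -/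
private lemma W_of_slots [TopologicalSpace Z] [IsTopologicalAddGroup Z]
    (b : (Fin k → Z) → A) (hml : IsMultilinear b)
    (U : Fin k → Set Z) (hUo : ∀ i, IsOpen (U i)) (hU0 : ∀ i, (0 : Z) ∈ U i)
    (hU : ∀ (g : Fin k → Z) (i), g i ∈ U i → b g = 0) :
    ∃ W : AddSubgroup Z, IsOpen (W : Set Z) ∧ ∀ (g : Fin k → Z) (i), g i ∈ W → b g = 0 := by
  refine ⟨AddSubgroup.closure (⋂ i, U i), ?_, ?_⟩
  · apply AddSubgroup.isOpen_of_mem_nhds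
    exact Filter.mem_of_superset
      ((isOpen_iInter_of_finite hUo).mem_nhds (Set.mem_iInter.mpr hU0))
      AddSubgroup.subset_closure
  · intro g i hgi
    have hle : AddSubgroup.closure (⋂ i, U i) ≤ (sliceHom b hml g i).ker := by
      rw [AddSubgroup.closure_le]
      intro x hx
      have : b (Function.update g i x) = 0 :=
        hU _ i (by rw [Function.update_self]; exact Set.mem_iInter.mp hx i)
      exact this
    have hmem := hle hgi
    rw [AddMonoidHom.mem_ker, sliceHom_apply, Function.update_eq_self] at hmem
    exact hmem

/-- Per-slot open set for discrete targets. -/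
private lemma slots_discrete [TopologicalSpace Z] [IsTopologicalAddGroup Z] [CompactSpace Z]
    [T2Space Z] [TopologicalSpace A] [DiscreteTopology A]
    (b : (Fin k → Z) → A) (hb : Continuous b) (hml : IsMultilinear b) (i : Fin k) :
    ∃ U : Set Z, IsOpen U ∧ (0 : Z) ∈ U ∧ ∀ g : Fin k → Z, g i ∈ U → b g = 0 := by
  have hK : IsCompact ((fun g : Fin k → Z => g i) '' (b ⁻¹' {0}ᶜ)) :=
    (((isClosed_discrete _).preimage hb).isCompact).image (continuous_apply i)
  refine ⟨((fun g : Fin k → Z => g i) '' (b ⁻¹' {0}ᶜ))ᶜ, isOpen_compl_iff.mpr hK.isClosed, ?_, ?_⟩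
  · rintro ⟨g, hg, hgi⟩
    have hgi' : g i = 0 := hgi
    have h0 := ml_update_zero b hml g i
    rw [show (0 : Z) = g i from hgi'.symm, Function.update_eq_self] at h0
    exact hg h0
  · intro g hgi
    by_contra hbg
    exact hgi ⟨g, by simpa using hbg, rfl⟩

/-- Per-slot open set for circle targets, when `k ≥ 2`. -/
private lemma slots_circle [TopologicalSpace Z] [IsTopologicalAddGroup Z] [CompactSpace Z]
    [T2Space Z] (hk2 : 2 ≤ k)
    (b : (Fin k → Z) → AddCircle (1 : ℝ)) (hb : Continuous b) (hml : IsMultilinear b)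
    (i : Fin k) :
    ∃ U : Set Z, IsOpen U ∧ (0 : Z) ∈ U ∧ ∀ g : Fin k → Z, g i ∈ U → b g = 0 := by
  have hK : IsCompact ((fun g : Fin k → Z => g i) ''
      (b ⁻¹' (Metric.ball (0 : AddCircle (1 : ℝ)) 4⁻¹)ᶜ)) :=
    (((Metric.isOpen_ball.isClosed_compl).preimage hb).isCompact).image (continuous_apply i)
  refine ⟨((fun g : Fin k → Z => g i) ''
      (b ⁻¹' (Metric.ball (0 : AddCircle (1 : ℝ)) 4⁻¹)ᶜ))ᶜ,
    isOpen_compl_iff.mpr hK.isClosed, ?_, ?_⟩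
  · rintro ⟨g, hg, hgi⟩
    have hgi' : g i = 0 := hgi
    have h0 := ml_update_zero b hml g i
    rw [show (0 : Z) = g i from hgi'.symm, Function.update_eq_self] at h0
    refine hg ?_
    show b g ∈ Metric.ball (0 : AddCircle (1 : ℝ)) 4⁻¹
    rw [h0]
    exact Metric.mem_ball_self (by norm_num)
  · intro g hgi
    -- pick another slot j ≠ i
    haveI : Nontrivial (Fin k) := Fin.nontrivial_iff_two_le.mpr hk2
    obtain ⟨j, hji⟩ := exists_ne i
    have hmem : ∀ x : Z, b (Function.update g j x) ∈ Metric.ball (0 : AddCircle (1 : ℝ)) 4⁻¹ := by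
      intro x
      by_contra hxmem
      exact hgi ⟨Function.update g j x, hxmem,
        by show Function.update g j x i = g i; exact Function.update_of_ne (Ne.symm hji) _ _⟩
    have h0 : b (Function.update g j (g j)) = 0 := by
      apply addCircle_eq_zero_of_small
      intro m
      have hsm : (m : ℕ) • b (Function.update g j (g j)) = b (Function.update g j (m • g j)) :=
        ((sliceHom b hml g j).map_nsmul m (g j)).symm
      rw [hsm]
      exact mem_ball_zero_iff.mp (hmem _)
    rwa [Function.update_eq_self] at h0

end Helpers

section Core

open scoped DirectSum

/-- The core construction: if `b` vanishes slotwise on an open subgroup, the dual of `Z`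
is `n`-divisible and `A` is `n`-divisible, then `b` is `n`-divisible in `SML`. -/
private lemma core_divisible
    {Z : Type} [AddCommGroup Z] [TopologicalSpace Z] [IsTopologicalAddGroup Z] [CompactSpace Z]
    (hdual : ∀ χ : Z →+ AddCircle (1 : ℝ), Continuous χ → ∀ n : ℕ, 1 ≤ n →
      ∃ χ' : Z →+ AddCircle (1 : ℝ), Continuous χ' ∧ n • χ' = χ)
    {A : Type} [AddCommGroup A] [TopologicalSpace A]
    (hdiv : ∀ (a : A) (n : ℕ), 1 ≤ n → ∃ a' : A, n • a' = a)
    {k : ℕ} (b : (Fin k → Z) → A) (hml : IsMultilinear b) (hsym : IsSymmetric b)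
    (W : AddSubgroup Z) (hWopen : IsOpen (W : Set Z))
    (hW : ∀ (g : Fin k → Z) (i : Fin k), g i ∈ W → b g = 0)
    (n : ℕ) (hn : 1 ≤ n) :
    ∃ b' : (Fin k → Z) → A,
      Continuous b' ∧ IsMultilinear b' ∧ IsSymmetric b' ∧ n • b' = b := by
  classical
  -- Step 1 : the quotient Z / W is finite
  haveI hfin : Finite (Z ⧸ W) := by
    have hopen : ∀ q : Z ⧸ W, IsOpen (QuotientAddGroup.mk ⁻¹' {q} : Set Z) := by
      intro q
      obtain ⟨z, rfl⟩ := QuotientAddGroup.mk_surjective q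
      have hset : (QuotientAddGroup.mk ⁻¹' {((z : Z ⧸ W))} : Set Z)
          = (fun x => x - z) ⁻¹' (W : Set Z) := by
        ext x
        simp only [Set.mem_preimage, Set.mem_singleton_iff, SetLike.mem_coe]
        rw [QuotientAddGroup.eq]
        constructor
        · intro h
          have := W.neg_mem h
          simpa [neg_add_rev, sub_eq_add_neg, add_comm] using this
        · intro h
          have := W.neg_mem h
          simpa [neg_sub, sub_eq_add_neg, add_comm] using this
      rw [hset]
      exact hWopen.preimage (continuous_id.sub continuous_const)
    have hcov : (Set.univ : Set Z) ⊆ ⋃ q : Z ⧸ W, QuotientAddGroup.mk ⁻¹' {q} :=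
      fun z _ => Set.mem_iUnion.mpr ⟨QuotientAddGroup.mk z, rfl⟩
    obtain ⟨t, ht⟩ := IsCompact.elim_finite_subcover isCompact_univ _ hopen hcov
    have hall : ∀ q : Z ⧸ W, q ∈ t := by
      intro q
      obtain ⟨z, rfl⟩ := QuotientAddGroup.mk_surjective q
      obtain ⟨q', hq't, hzq'⟩ := Set.mem_iUnion₂.mp (ht (Set.mem_univ z))
      have : (z : Z ⧸ W) = q' := hzq'
      rw [this]; exact hq't
    exact Set.finite_univ_iff.mp (t.finite_toSet.subset fun q _ => hall q)
  -- Step 2 : structure theorem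
  obtain ⟨ι, hι, m, hm, ⟨eqv⟩⟩ := AddCommGroup.equiv_directSum_zmod_of_finite' (Z ⧸ W)
  letI := hι
  letI : DecidableEq ι := Classical.decEq ι
  haveI hmNZ : ∀ i, NeZero (m i) := fun i => ⟨by have := hm i; omega⟩
  set π : Z →+ ⨁ i, ZMod (m i) := eqv.toAddMonoidHom.comp (QuotientAddGroup.mk' W) with hπdef
  have hπapp : ∀ z : Z, π z = eqv (QuotientAddGroup.mk z) := fun z => rfl
  have hπW : ∀ z : Z, π z = 0 ↔ z ∈ W := by
    intro z
    rw [hπapp, AddEquiv.map_eq_zero_iff, QuotientAddGroup.eq_zero_iff]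
  have hπsurj : Function.Surjective π :=
    eqv.surjective.comp (QuotientAddGroup.mk'_surjective W)
  choose zz hzz using fun i : ι => hπsurj (DirectSum.of (fun i => ZMod (m i)) i 1)
  set φ : ∀ i : ι, Z →+ ZMod (m i) := fun i =>
    AddMonoidHom.mk' (fun z => π z i) (fun a c => by
      show (π (a + c)) i = (π a) i + (π c) i
      rw [map_add, DirectSum.add_apply]) with hφdef
  have hφapp : ∀ (i : ι) (z : Z), φ i z = π z i := fun i z => rfl
  set χ : ∀ i : ι, Z →+ AddCircle (1 : ℝ) := fun i => (ZMod.toAddCircle).comp (φ i) with hχdef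
  have hχapp : ∀ (i : ι) (z : Z), χ i z = ZMod.toAddCircle (φ i z) := fun i z => rfl
  have hχcont : ∀ i : ι, Continuous (χ i) := by
    intro i
    apply continuous_of_coset_const₁ W hWopen
    intro a c hac
    have h0 : φ i (a - c) = 0 := by
      rw [hφapp, (hπW _).mpr hac]
      rfl
    have : χ i a - χ i c = 0 := by
      rw [← map_sub, hχapp, h0, map_zero]
    exact sub_eq_zero.mp this
  choose χ' hχ'cont hχ'eq using fun i : ι => hdual (χ i) (hχcont i) n hn
  have hχ'eq' : ∀ (i : ι) (z : Z), n • χ' i z = χ i z := by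
    intro i z
    have := DFunLike.congr_fun (hχ'eq i) z
    exact this
  set N : ι → ℕ := fun i => n * m i with hNdef
  haveI hNNZ : ∀ i, NeZero (N i) := fun i =>
    ⟨Nat.mul_ne_zero (by omega) (NeZero.ne _)⟩
  -- χ' i is (N i)-torsion valued
  have hφ'ex : ∀ (i : ι) (z : Z), ∃ j : ZMod (N i), χ' i z = ZMod.toAddCircle j := by
    intro i z
    apply addCircle_torsion
    have hNsmul : (N i) • χ' i z = m i • (n • χ' i z) := by
      rw [← mul_smul]
      congr 1
      rw [Nat.mul_comm]
    rw [hNsmul, hχ'eq' i z, hχapp]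
    rw [← (ZMod.toAddCircle).map_nsmul]
    have h0 : (m i) • φ i z = 0 := by
      rw [nsmul_eq_mul, ZMod.natCast_self, zero_mul]
    rw [h0, map_zero]
  choose φ'f hφ'f using hφ'ex
  set φ' : ∀ i : ι, Z →+ ZMod (N i) := fun i =>
    AddMonoidHom.mk' (φ'f i) (by
      intro a c
      apply ZMod.toAddCircle_injective (N i)
      rw [map_add, ← hφ'f, ← hφ'f, ← hφ'f, map_add]) with hφ'def
  have hφ' : ∀ (i : ι) (z : Z), χ' i z = ZMod.toAddCircle (φ' i z) := fun i z => hφ'f i z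
  -- n-fold smul of toAddCircle
  have hndiv : ∀ (i : ι) (x : ZMod (N i)),
      n • ZMod.toAddCircle x = ZMod.toAddCircle ((x.val : ZMod (m i))) := by
    intro i x
    rw [ZMod.toAddCircle_apply, ZMod.toAddCircle_natCast, ← coe_nsmul_circ]
    congr 1
    rw [nsmul_eq_mul]
    have hn0 : (n : ℝ) ≠ 0 := Nat.cast_ne_zero.mpr (by omega)
    have hm0 : ((m i : ℕ) : ℝ) ≠ 0 := Nat.cast_ne_zero.mpr (NeZero.ne _)
    have hNi : ((N i : ℕ) : ℝ) = (n : ℝ) * ((m i : ℕ) : ℝ) := by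
      have hNi' : N i = n * m i := rfl
      rw [hNi']
      push_cast
      ring
    rw [hNi]
    field_simp
  -- the key congruence between φ' and φ
  have hval : ∀ (i : ι) (z : Z), ∃ t : ℤ,
      ((φ' i z).val : ℤ) = ((φ i z).val : ℤ) + (m i : ℤ) * t := by
    intro i z
    have h1 : ZMod.toAddCircle (φ i z) = ZMod.toAddCircle (((φ' i z).val : ZMod (m i))) := by
      rw [← hχapp, ← hχ'eq' i z, hφ' i z, hndiv]
    have h2 : φ i z = (((φ' i z).val : ℕ) : ZMod (m i)) := ZMod.toAddCircle_injective _ h1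
    have h3 : (φ i z).val = (φ' i z).val % m i := by rw [h2, ZMod.val_natCast]
    refine ⟨(((φ' i z).val / m i : ℕ) : ℤ), ?_⟩
    rw [h3]
    exact_mod_cast (Nat.mod_add_div (φ' i z).val (m i)).symm
  -- coefficients
  set c : (Fin k → ι) → A := fun I => b (fun j => zz (I j)) with hcdef
  have hcW : ∀ (I : Fin k → ι) (j : Fin k), ((m (I j)) : ℤ) • c I = 0 := by
    intro I j
    have hWmem : ((m (I j)) : ℤ) • zz (I j) ∈ W := by
      rw [← hπW, map_zsmul, hzz]
      rw [← (DirectSum.of (fun i => ZMod (m i)) (I j)).map_zsmul]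
      have : ((m (I j)) : ℤ) • (1 : ZMod (m (I j))) = 0 := by
        rw [zsmul_eq_mul, mul_one]
        exact_mod_cast ZMod.natCast_self (m (I j))
      rw [this, map_zero]
    have h1 : b (Function.update (fun j' => zz (I j')) j (((m (I j)) : ℤ) • zz (I j))) = 0 :=
      hW _ j (by rw [Function.update_self]; exact hWmem)
    have h2 := (sliceHom b hml (fun j' => zz (I j')) j).map_zsmul ((m (I j)) : ℤ) (zz (I j))
    rw [sliceHom_apply, sliceHom_apply] at h2
    rw [Function.update_eq_self] at h2
    rw [hcdef, ← h2, h1]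
  have hcsym : ∀ (I : Fin k → ι) (σ : Equiv.Perm (Fin k)), c (I ∘ σ) = c I := by
    intro I σ
    have := hsym σ (fun j => zz (I j))
    exact this
  letI : LinearOrder ι := LinearOrder.lift' (Fintype.equivFin ι) (Fintype.equivFin ι).injective
  choose craw hcraw using fun I : Fin k → ι => hdiv (c I) n hn
  set c' : (Fin k → ι) → A := fun I => craw (I ∘ Tuple.sort I) with hc'def
  have hc'div : ∀ I : Fin k → ι, n • c' I = c I := by
    intro I
    rw [hc'def]
    dsimp only
    rw [hcraw]
    exact hcsym I (Tuple.sort I)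
  have hc'sym : ∀ (I : Fin k → ι) (σ : Equiv.Perm (Fin k)), c' (I ∘ σ) = c' I := by
    intro I σ
    rw [hc'def]
    dsimp only
    rw [Tuple.comp_perm_comp_sort_eq_comp_sort]
  have hc'W : ∀ (I : Fin k → ι) (j : Fin k), ((N (I j)) : ℤ) • c' I = 0 := by
    intro I j
    have h1 : ((N (I j)) : ℤ) = ((m (I j)) : ℤ) * (n : ℤ) := by
      have : N (I j) = n * m (I j) := rfl
      rw [this]; push_cast; ring
    rw [h1, mul_smul]
    rw [show ((n : ℤ) • c' I) = n • c' I from natCast_zsmul _ _]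
    rw [hc'div]
    exact hcW I j
  -- the divided map
  set d : ι → Z → ℤ := fun i z => ((φ' i z).val : ℤ) with hddef
  set b' : (Fin k → Z) → A := fun g => ∑ I : Fin k → ι, (∏ j, d (I j) (g j)) • c' I with hb'def
  -- additivity of d modulo N
  have hadd_d : ∀ (i : ι) (x y : Z), ∃ t : ℤ, d i (x + y) = d i x + d i y + (N i : ℤ) * t := by
    intro i x y
    have h1 : φ' i (x + y) = φ' i x + φ' i y := map_add _ _ _
    have h2 : (φ' i (x + y)).val = ((φ' i x).val + (φ' i y).val) % N i := by
      rw [h1, ZMod.val_add]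
    refine ⟨-(((((φ' i x).val + (φ' i y).val) / N i : ℕ)) : ℤ), ?_⟩
    have h3 := Nat.mod_add_div ((φ' i x).val + (φ' i y).val) (N i)
    rw [hddef]
    dsimp only
    rw [h2]
    push_cast
    push_cast at h3
    linarith
  -- single-factor congruence
  have hkey : ∀ (a : A) (Nc : ℤ), Nc • a = 0 → ∀ (p q r t : ℤ), p = q + Nc * t →
      (p * r) • a = (q * r) • a := by
    intro a Nc hNa p q r t hpq
    rw [hpq]
    have hexp : (q + Nc * t) * r = q * r + (t * r) * Nc := by ring
    rw [hexp, add_smul, mul_smul (t * r) Nc a, hNa, smul_zero, add_zero]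
  -- full product congruence
  have hprodcongr : ∀ (a : A) (M : Fin k → ℤ), (∀ j, M j • a = 0) →
      ∀ (f g : Fin k → ℤ), (∀ j, ∃ t, f j = g j + M j * t) →
      (∏ j, f j) • a = (∏ j, g j) • a := by
    intro a M hM f g hfg
    have key : ∀ s : Finset (Fin k),
        (∏ j, (if j ∈ s then g j else f j)) • a = (∏ j, f j) • a := by
      intro s
      induction s using Finset.induction_on with
      | empty => simp
      | @insert jj s hjj ih =>
        have hsplit : ∀ h : Fin k → ℤ,
            (∏ j, h j) = h jj * ∏ j ∈ Finset.univ.erase jj, h j :=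
          fun h => (Finset.mul_prod_erase Finset.univ h (Finset.mem_univ jj)).symm
        set R := ∏ j ∈ Finset.univ.erase jj, (if j ∈ s then g j else f j) with hRdef
        have e1 : (∏ j, (if j ∈ insert jj s then g j else f j)) = g jj * R := by
          rw [hsplit]
          congr 1
          · simp
          · rw [hRdef]
            apply Finset.prod_congr rfl
            intro j hje
            have hne : j ≠ jj := Finset.ne_of_mem_erase hje
            simp [Finset.mem_insert, hne]
        have e2 : (∏ j, (if j ∈ s then g j else f j)) = f jj * R := by
          rw [hsplit]
          congr 1
          simp [hjj]
        obtain ⟨t, htt⟩ := hfg jj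
        have hgf : g jj = f jj + M jj * (-t) := by rw [htt]; ring
        rw [e1, hkey a (M jj) (hM jj) (g jj) (f jj) R (-t) hgf, ← e2, ih]
    have := key Finset.univ
    simp only [Finset.mem_univ, if_true] at this
    exact this.symm
  -- coefficient of an updated tuple
  have hcoefupd : ∀ (I : Fin k → ι) (g : Fin k → Z) (i : Fin k) (x : Z),
      (fun j => d (I j) (Function.update g i x j))
        = Function.update (fun j => d (I j) (g j)) i (d (I i) x) := by
    intro I g i x
    funext j
    rcases eq_or_ne j i with rfl | hji
    · simp
    · simp [Function.update_of_ne hji]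
  -- multilinearity
  have hml' : IsMultilinear b' := by
    intro i g x y
    have hterm : ∀ I : Fin k → ι,
        (∏ j, d (I j) (Function.update g i (x + y) j)) • c' I
          = (∏ j, d (I j) (Function.update g i x j)) • c' I
            + (∏ j, d (I j) (Function.update g i y j)) • c' I := by
      intro I
      rw [hcoefupd, hcoefupd, hcoefupd,
        Finset.prod_update_of_mem (Finset.mem_univ i),
        Finset.prod_update_of_mem (Finset.mem_univ i),
        Finset.prod_update_of_mem (Finset.mem_univ i)]
      set R := ∏ j ∈ Finset.univ \ {i}, d (I j) (g j) with hRdef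
      obtain ⟨t, ht⟩ := hadd_d (I i) x y
      have h1 : (d (I i) (x + y) * R) • c' I = ((d (I i) x + d (I i) y) * R) • c' I :=
        hkey (c' I) ((N (I i)) : ℤ) (hc'W I i) _ _ R t ht
      rw [h1, add_mul, add_smul]
    rw [hb'def]
    dsimp only
    calc ∑ I : Fin k → ι, (∏ j, d (I j) (Function.update g i (x + y) j)) • c' I
        = ∑ I : Fin k → ι, ((∏ j, d (I j) (Function.update g i x j)) • c' I
            + (∏ j, d (I j) (Function.update g i y j)) • c' I) :=
          Finset.sum_congr rfl fun I _ => hterm I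
      _ = _ := Finset.sum_add_distrib
  -- symmetry
  have hsym' : IsSymmetric b' := by
    intro σ g
    rw [hb'def]
    dsimp only
    have hbij : Function.Bijective (fun J : Fin k → ι => J ∘ σ) := by
      constructor
      · intro J1 J2 hJ
        funext j
        have := congrFun hJ (σ⁻¹ j)
        simpa using this
      · intro J
        refine ⟨J ∘ ⇑σ⁻¹, ?_⟩
        funext j
        simp
    refine (Fintype.sum_bijective (fun J : Fin k → ι => J ∘ σ) hbij _ _ ?_).symm
    intro J
    have hprod : (∏ j, d ((J ∘ σ) j) ((g ∘ σ) j)) = ∏ j, d (J j) (g j) :=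
      Equiv.prod_comp σ (fun j => d (J j) (g j))
    rw [hc'sym J σ, hprod]
  -- n-divisibility
  have hdvd : n • b' = b := by
    funext g
    have hs1 : (n • b') g = ∑ I : Fin k → ι, (∏ j, d (I j) (g j)) • (n • c' I) := by
      show n • b' g = _
      rw [hb'def]
      dsimp only
      rw [Finset.smul_sum]
      apply Finset.sum_congr rfl
      intro I _
      calc n • ((∏ j, d (I j) (g j)) • c' I)
          = (n : ℤ) • ((∏ j, d (I j) (g j)) • c' I) := (natCast_zsmul _ _).symm
        _ = ((n : ℤ) * (∏ j, d (I j) (g j))) • c' I := (mul_smul _ _ _).symm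
        _ = ((∏ j, d (I j) (g j)) * (n : ℤ)) • c' I := by rw [mul_comm]
        _ = (∏ j, d (I j) (g j)) • ((n : ℤ) • c' I) := mul_smul _ _ _
        _ = (∏ j, d (I j) (g j)) • (n • c' I) := by rw [natCast_zsmul]
    rw [hs1]
    -- expansion of b in terms of the generators
    have hgmod : ∀ j, g j - (∑ i : ι, ((φ i (g j)).val : ℤ) • zz i) ∈ W := by
      intro j
      rw [← hπW, map_sub, map_sum]
      have hterm : ∀ i : ι, π (((φ i (g j)).val : ℤ) • zz i)
          = DirectSum.of (fun i => ZMod (m i)) i (φ i (g j)) := by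
        intro i
        rw [map_zsmul, hzz i, ← (DirectSum.of (fun i => ZMod (m i)) i).map_zsmul]
        congr 1
        rw [zsmul_eq_mul, mul_one, Int.cast_natCast, ZMod.natCast_zmod_val]
      rw [Finset.sum_congr rfl fun i _ => hterm i]
      have hsumof : (∑ i : ι, DirectSum.of (fun i => ZMod (m i)) i (φ i (g j))) = π (g j) := by
        have := DirectSum.sum_univ_of (π (g j))
        simpa [hφapp] using this
      rw [hsumof, sub_self]
    have hbg : b g = b (fun j => ∑ i : ι, ((φ i (g j)).val : ℤ) • zz i) :=
      ml_congr_mod b hml W hW _ _ hgmod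
    have hexp : b (fun j => ∑ i : ι, ((φ i (g j)).val : ℤ) • zz i)
        = ∑ r : Fin k → ι, (∏ j, ((φ (r j) (g j)).val : ℤ)) • c r := by
      have h2 := (toML b hml).map_sum_finset (fun j i => ((φ i (g j)).val : ℤ) • zz i)
        (fun _ => Finset.univ)
      have h3 : ∀ r : Fin k → ι,
          (toML b hml) (fun j => ((φ (r j) (g j)).val : ℤ) • zz (r j))
            = (∏ j, ((φ (r j) (g j)).val : ℤ)) • ((toML b hml) (fun j => zz (r j))) :=
        fun r => (toML b hml).map_smul_univ (fun j => ((φ (r j) (g j)).val : ℤ))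
          (fun j => zz (r j))
      have h4 : b (fun j => ∑ i : ι, ((φ i (g j)).val : ℤ) • zz i)
          = (toML b hml) (fun j => ∑ i ∈ Finset.univ, ((φ i (g j)).val : ℤ) • zz i) := rfl
      rw [h4, h2, Fintype.piFinset_univ]
      refine Finset.sum_congr rfl fun r _ => ?_
      rw [h3 r]
      rfl
    calc ∑ I : Fin k → ι, (∏ j, d (I j) (g j)) • (n • c' I)
        = ∑ I : Fin k → ι, (∏ j, d (I j) (g j)) • c I :=
          Finset.sum_congr rfl fun I _ => by rw [hc'div I]
      _ = ∑ I : Fin k → ι, (∏ j, ((φ (I j) (g j)).val : ℤ)) • c I :=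
          Finset.sum_congr rfl fun I _ =>
            hprodcongr (c I) (fun j => ((m (I j)) : ℤ)) (fun j => hcW I j)
              (fun j => d (I j) (g j)) (fun j => ((φ (I j) (g j)).val : ℤ))
              (fun j => by simp only [hddef]; exact hval (I j) (g j))
      _ = b g := by rw [hbg, hexp]
  -- continuity
  have hkeropen : ∀ i : ι, IsOpen ((χ' i).ker : Set Z) := by
    intro i
    have hrange : (Set.range (χ' i)).Finite := by
      have hsub : Set.range (χ' i)
          ⊆ Set.range (ZMod.toAddCircle : ZMod (N i) → AddCircle (1 : ℝ)) := by
        rintro x ⟨z, rfl⟩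
        exact ⟨φ' i z, (hφ' i z).symm⟩
      exact (Set.finite_range _).subset hsub
    have hVo : IsOpen ((Set.range (χ' i) \ {0})ᶜ) :=
      isOpen_compl_iff.mpr (hrange.subset Set.diff_subset).isClosed
    have hset : ((χ' i).ker : Set Z) = (χ' i) ⁻¹' ((Set.range (χ' i) \ {0})ᶜ) := by
      ext z
      simp only [SetLike.mem_coe, AddMonoidHom.mem_ker, Set.mem_preimage, Set.mem_compl_iff,
        Set.mem_diff, Set.mem_singleton_iff, Set.mem_range, not_and, not_not]
      constructor
      · intro h _; exact h
      · intro h; exact h ⟨z, rfl⟩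
    rw [hset]
    exact hVo.preimage (hχ'cont i)
  have hKopen : IsOpen ((⨅ i : ι, (χ' i).ker : AddSubgroup Z) : Set Z) := by
    rw [AddSubgroup.coe_iInf]
    exact isOpen_iInter_of_finite hkeropen
  have hb'cont : Continuous b' := by
    apply continuous_of_coset_const (⨅ i : ι, (χ' i).ker) hKopen
    intro g h hgh
    have hdgh : ∀ (i : ι) (j : Fin k), d i (g j) = d i (h j) := by
      intro i j
      have h1 : g j - h j ∈ (χ' i).ker := (AddSubgroup.mem_iInf.mp (hgh j)) i
      have h2 : χ' i (g j) = χ' i (h j) := by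
        have h3 := (AddMonoidHom.mem_ker).mp h1
        rw [map_sub] at h3
        exact sub_eq_zero.mp h3
      have h4 : φ' i (g j) = φ' i (h j) :=
        ZMod.toAddCircle_injective _ (by rw [← hφ', ← hφ', h2])
      simp only [hddef]
      rw [h4]
    rw [hb'def]
    dsimp only
    exact Finset.sum_congr rfl fun I _ => by
      rw [Finset.prod_congr rfl fun j _ => hdgh (I j) j]
  exact ⟨b', hb'cont, hml', hsym', hdvd⟩

end Core

/-- Let `Z` be a compact metrizable abelian topological group with divisible Pontryagin
dual, and let `A` be either a countable discrete divisible abelian group or the circle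
group `ℝ/ℤ`.  Then for every `k ≥ 1` the group `SML_k(Z,A)` of continuous symmetric
multilinear maps `Z^k → A` is divisible. -/
theorem continuous_sml_divisible
    (Z : Type) [AddCommGroup Z] [TopologicalSpace Z] [IsTopologicalAddGroup Z]
    [CompactSpace Z] [TopologicalSpace.MetrizableSpace Z]
    (hdual : ∀ χ : Z →+ AddCircle (1 : ℝ), Continuous χ → ∀ n : ℕ, 1 ≤ n →
      ∃ χ' : Z →+ AddCircle (1 : ℝ), Continuous χ' ∧ n • χ' = χ)
    (A : Type) [AddCommGroup A] [TopologicalSpace A] [IsTopologicalAddGroup A]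
    (hA : (Countable A ∧ DiscreteTopology A ∧
            ∀ (a : A) (n : ℕ), 1 ≤ n → ∃ a' : A, n • a' = a) ∨
          ∃ e : A ≃+ AddCircle (1 : ℝ), Continuous e ∧ Continuous e.symm)
    (k : ℕ) (hk : 1 ≤ k)
    (b : (Fin k → Z) → A) (hb : Continuous b) (hml : IsMultilinear b)
    (hsym : IsSymmetric b) (n : ℕ) (hn : 1 ≤ n) :
    ∃ b' : (Fin k → Z) → A,
      Continuous b' ∧ IsMultilinear b' ∧ IsSymmetric b' ∧ n • b' = b := by
  haveI : T2Space Z := by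
    letI := TopologicalSpace.metrizableSpaceMetric Z
    infer_instance
  rcases hA with ⟨_, hAdisc, hAdiv⟩ | ⟨e, he, he'⟩
  · -- discrete case
    haveI := hAdisc
    have hslots : ∀ i : Fin k, ∃ U : Set Z, IsOpen U ∧ (0 : Z) ∈ U ∧
        ∀ g : Fin k → Z, g i ∈ U → b g = 0 := fun i => slots_discrete b hb hml i
    choose U hUo hU0 hU using hslots
    obtain ⟨W, hWo, hW⟩ := W_of_slots b hml U hUo hU0 (fun g i => hU i g)
    exact core_divisible hdual hAdiv b hml hsym W hWo hW n hn
  · -- circle case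
    set b₁ : (Fin k → Z) → AddCircle (1 : ℝ) := fun g => e (b g) with hb₁def
    have hb₁c : Continuous b₁ := he.comp hb
    have hml₁ : IsMultilinear b₁ := by
      intro i g x y
      rw [hb₁def]
      dsimp only
      rw [hml i g x y, map_add]
    have hsym₁ : IsSymmetric b₁ := by
      intro σ g
      rw [hb₁def]
      dsimp only
      rw [hsym σ g]
    rcases Nat.lt_or_ge k 2 with hk2 | hk2
    · -- k = 1 : direct use of the dual divisibility
      have hk1 : k = 1 := by omega
      subst hk1
      have hupd1 : ∀ (f : Fin 1 → Z) (i : Fin 1) (v : Z),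
          Function.update f i v = fun _ => v := by
        intro f i v
        funext j
        rw [Subsingleton.elim j i, Function.update_self]
      set χ : Z →+ AddCircle (1 : ℝ) := AddMonoidHom.mk' (fun z => b₁ (fun _ => z)) (by
        intro x y
        have h := hml₁ 0 (fun _ => 0) x y
        rwa [hupd1, hupd1, hupd1] at h) with hχdef
    -- continuity of χ
      have hχc : Continuous χ := hb₁c.comp (continuous_pi fun _ => continuous_id)
      obtain ⟨χ', hχ'c, hχ'n⟩ := hdual χ hχc n hn
      refine ⟨fun g => e.symm (χ' (g 0)), ?_, ?_, ?_, ?_⟩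
      · exact he'.comp (hχ'c.comp (continuous_apply 0))
      · intro i g x y
        show e.symm (χ' ((Function.update g i (x + y)) 0))
            = e.symm (χ' ((Function.update g i x) 0)) + e.symm (χ' ((Function.update g i y) 0))
        rw [hupd1, hupd1, hupd1]
        rw [map_add, map_add]
      · intro σ g
        show e.symm (χ' ((g ∘ σ) 0)) = e.symm (χ' (g 0))
        rw [show (g ∘ σ) 0 = g 0 from by
          rw [Function.comp_apply, Subsingleton.elim (σ 0) (0 : Fin 1)]]
      · funext g
        show n • e.symm (χ' (g 0)) = b g
        rw [← map_nsmul]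
        have h1 : n • χ' (g 0) = χ (g 0) := DFunLike.congr_fun hχ'n (g 0)
        rw [h1]
        have h2 : χ (g 0) = b₁ (fun _ => g 0) := rfl
        rw [h2]
        have h3 : (fun _ : Fin 1 => g 0) = g := by
          funext j
          rw [Subsingleton.elim j 0]
        rw [h3, hb₁def]
        dsimp only
        exact e.symm_apply_apply (b g)
    · -- k ≥ 2
      have hslots : ∀ i : Fin k, ∃ U : Set Z, IsOpen U ∧ (0 : Z) ∈ U ∧
          ∀ g : Fin k → Z, g i ∈ U → b₁ g = 0 := fun i => slots_circle hk2 b₁ hb₁c hml₁ i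
      choose U hUo hU0 hU using hslots
      obtain ⟨W, hWo, hW⟩ := W_of_slots b₁ hml₁ U hUo hU0 (fun g i => hU i g)
      obtain ⟨b₁', hb₁'c, hml₁', hsym₁', hdvd₁⟩ :=
        core_divisible hdual addCircle_div b₁ hml₁ hsym₁ W hWo hW n hn
      refine ⟨fun g => e.symm (b₁' g), he'.comp hb₁'c, ?_, ?_, ?_⟩
      · intro i g x y
        show e.symm (b₁' (Function.update g i (x + y)))
            = e.symm (b₁' (Function.update g i x)) + e.symm (b₁' (Function.update g i y))
        rw [hml₁' i g x y, map_add]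
      · intro σ g
        show e.symm (b₁' (g ∘ σ)) = e.symm (b₁' g)
        rw [hsym₁' σ g]
      · funext g
        show n • e.symm (b₁' g) = b g
        rw [← map_nsmul]
        have h1 : n • b₁' g = b₁ g := by
          have h2 := congrFun hdvd₁ g
          simpa using h2
        rw [h1, hb₁def]
        dsimp only
        exact e.symm_apply_apply (b g)
end
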